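/- arXiv:1607.01741 — 2 statements merged into one kernel-verified Lean document; each statement's English description precedes it below -/
import Mathlib

section
/- Let m be a natural number and let u, v : ℝⁿ → ℂ be Schwartz functions. Then ∫_{ℝⁿ} (1+|ξ|²)^m û(ξ) conj(v̂(ξ)) dξ = Σ_{α ∈ ℕ₀ⁿ, |α| ≤ m} C(m,|α|) · (|α|! / (α₁!⋯αₙ!)) · ∫_{ℝⁿ} (∂^α u)(x) · conj((∂^α v)(x)) dx, where C(m,k) is the binomial coefficient, |α| = α₁ + ⋯ + αₙ, and ∂^α denotes the mixed partial derivative of order α. -/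
open MeasureTheory

/-- The Fourier transform with the convention `f̂(ξ) = (2π)^{-n/2} ∫ e^{-i ξ·x} f(x) dx`. -/
noncomputable def ft {n : ℕ} (f : EuclideanSpace ℝ (Fin n) → ℂ)
    (ξ : EuclideanSpace ℝ (Fin n)) : ℂ :=
  (((2 * Real.pi) ^ (-(n : ℝ) / 2) : ℝ) : ℂ) *
    ∫ x, Complex.exp (-(Complex.I * ((inner ℝ ξ x : ℝ) : ℂ))) * f x

/-- The partial derivative `∂f/∂xᵢ`. -/
noncomputable def pd {n : ℕ} (i : Fin n) (f : EuclideanSpace ℝ (Fin n) → ℂ) :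
    EuclideanSpace ℝ (Fin n) → ℂ :=
  fun x => fderiv ℝ f x (EuclideanSpace.single i 1)

/-- The mixed partial derivative `∂^α f = ∂^{|α|} f / ∂x₁^{α₁} ⋯ ∂xₙ^{αₙ}`
for a multi-index `α`. -/
noncomputable def mderiv {n : ℕ} (α : Fin n → ℕ) (f : EuclideanSpace ℝ (Fin n) → ℂ) :
    EuclideanSpace ℝ (Fin n) → ℂ :=
  (List.finRange n).foldr (fun i g => (pd i)^[α i] g) f

open Real Complex SchwartzMap FourierTransform ComplexConjugate RealInnerProductSpace

variable {n : ℕ}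

local notation "𝕍" => EuclideanSpace ℝ (Fin n)

/-- partial derivative as a map on Schwartz space -/
noncomputable def sdP (i : Fin n) : 𝓢(𝕍, ℂ) →L[ℝ] 𝓢(𝕍, ℂ) :=
  LineDeriv.lineDerivOpCLM ℝ 𝓢(𝕍, ℂ) (EuclideanSpace.single i (1 : ℝ))

/-- mixed derivative as a map on Schwartz space -/
noncomputable def sD (α : Fin n → ℕ) (f : 𝓢(𝕍, ℂ)) : 𝓢(𝕍, ℂ) :=
  (List.finRange n).foldr (fun i g => (sdP i)^[α i] g) f

lemma pd_coe (i : Fin n) (f : 𝓢(𝕍, ℂ)) : pd i ⇑f = ⇑(sdP i f) := rfl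

lemma pd_iter_coe (i : Fin n) (k : ℕ) (f : 𝓢(𝕍, ℂ)) :
    (pd i)^[k] ⇑f = ⇑((sdP i)^[k] f) := by
  induction k generalizing f with
  | zero => rfl
  | succ k ih =>
    rw [Function.iterate_succ_apply, Function.iterate_succ_apply, pd_coe, ih]

lemma mderiv_coe (α : Fin n → ℕ) (f : 𝓢(𝕍, ℂ)) : mderiv α ⇑f = ⇑(sD α f) := by
  rw [mderiv, sD]
  induction List.finRange n generalizing f with
  | nil => rfl
  | cons i l ih => rw [List.foldr_cons, List.foldr_cons, ih, pd_iter_coe]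

lemma ft_eq (f : 𝕍 → ℂ) (ξ : 𝕍) :
    ft f ξ = (((2 * π) ^ (-(n : ℝ) / 2) : ℝ) : ℂ) * 𝓕 f ((2 * π)⁻¹ • ξ) := by
  rw [ft, Real.fourier_eq']
  congr 1
  have h2π : (2 * π) ≠ 0 := by positivity
  refine integral_congr_ae (Filter.Eventually.of_forall fun x => ?_)
  show cexp (-(I * (⟪ξ, x⟫ : ℝ))) * f x = cexp (↑(-2 * π * ⟪x, (2 * π)⁻¹ • ξ⟫) * I) • f x
  rw [show ⟪x, (2 * π)⁻¹ • ξ⟫ = (2 * π)⁻¹ * ⟪ξ, x⟫ by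
    rw [real_inner_comm, real_inner_smul_left]]
  rw [show (-2 * π * ((2 * π)⁻¹ * ⟪ξ, x⟫)) = -⟪ξ, x⟫ by field_simp]
  rw [smul_eq_mul]
  push_cast
  ring_nf

lemma integrable_conj' {f : 𝕍 → ℂ} (hf : Integrable f) :
    Integrable (fun x => conj (f x)) := by
  have := (Complex.conjCLE.toContinuousLinearMap).integrable_comp hf
  simpa using this

lemma F_mul_conj_integrable (g h : 𝓢(𝕍, ℂ)) :
    Integrable (fun ξ : 𝕍 => 𝓕 ⇑g ξ * conj (𝓕 ⇑h ξ)) := by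
  have hg : Integrable (fun ξ : 𝕍 => conj (𝓕 ⇑h ξ)) :=
    integrable_conj' (fourierTransformCLM ℂ h).integrable
  refine hg.bdd_mul (c := ‖(fourierTransformCLM ℂ g).toBoundedContinuousFunction‖) ?_ ?_
  · exact (fourierTransformCLM ℂ g).continuous.aestronglyMeasurable
  · refine Filter.Eventually.of_forall fun x => ?_
    exact (fourierTransformCLM ℂ g).toBoundedContinuousFunction.norm_coe_le_norm x
lemma F_conj_F (h : 𝓢(𝕍, ℂ)) (x : 𝕍) :
    𝓕 (fun ξ : 𝕍 => conj (𝓕 ⇑h ξ)) x = conj (h x) := by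
  have inv : 𝓕⁻ (𝓕 ⇑h) = ⇑h :=
    h.continuous.fourierInv_fourier_eq h.integrable (fourierTransformCLM ℂ h).integrable
  rw [Real.fourier_eq']
  have : ∀ v : 𝕍, Complex.exp (↑(-2 * π * ⟪v, x⟫) * I) • conj (𝓕 ⇑h v)
      = conj (Complex.exp (↑(2 * π * ⟪v, x⟫) * I) * 𝓕 ⇑h v) := by
    intro v
    rw [smul_eq_mul, map_mul]
    congr 1
    rw [← Complex.exp_conj, map_mul, Complex.conj_I, Complex.conj_ofReal]
    push_cast
    ring_nf
  rw [integral_congr_ae (Filter.Eventually.of_forall this), integral_conj]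
  rw [show (∫ v : 𝕍, Complex.exp (↑(2 * π * ⟪v, x⟫) * I) * 𝓕 ⇑h v) = 𝓕⁻ (𝓕 ⇑h) x by
    rw [Real.fourierInv_eq']; simp_rw [smul_eq_mul]]
  rw [inv]

lemma parsevalF (g h : 𝓢(𝕍, ℂ)) :
    ∫ ξ : 𝕍, 𝓕 ⇑g ξ * conj (𝓕 ⇑h ξ) = ∫ x : 𝕍, g x * conj (h x) := by
  have hL : Continuous fun p : 𝕍 × 𝕍 => (innerₗ 𝕍) p.1 p.2 := by
    simpa using (continuous_inner (𝕜 := ℝ) (E := 𝕍))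
  have hw : Integrable (fun ξ : 𝕍 => conj (𝓕 ⇑h ξ)) :=
    integrable_conj' (fourierTransformCLM ℂ h).integrable
  have key := VectorFourier.integral_bilin_fourierIntegral_eq_flip
      (μ := (volume : Measure 𝕍)) (ν := (volume : Measure 𝕍)) (L := innerₗ 𝕍)
      (M := ContinuousLinearMap.mul ℂ ℂ) Real.continuous_fourierChar hL g.integrable hw
  rw [flip_innerₗ] at key
  calc ∫ ξ : 𝕍, 𝓕 ⇑g ξ * conj (𝓕 ⇑h ξ)
      = ∫ x : 𝕍, g x * 𝓕 (fun ξ : 𝕍 => conj (𝓕 ⇑h ξ)) x := by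
        have unf : ∀ f : 𝕍 → ℂ,
            VectorFourier.fourierIntegral 𝐞 volume (innerₗ 𝕍) f = 𝓕 f := fun _ => rfl
        simp only [ContinuousLinearMap.mul_apply', unf] at key
        exact key
    _ = ∫ x : 𝕍, g x * conj (h x) := by
        refine integral_congr_ae (Filter.Eventually.of_forall fun x => ?_)
        simp only [F_conj_F]
lemma ft_mul_conj_eq (g h : 𝓢(𝕍, ℂ)) (ξ : 𝕍) :
    ft ⇑g ξ * conj (ft ⇑h ξ) =
      ((((2 * π) ^ (-(n : ℝ) / 2) : ℝ) ^ 2 : ℝ) : ℂ) *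
        (𝓕 ⇑g ((2 * π)⁻¹ • ξ) * conj (𝓕 ⇑h ((2 * π)⁻¹ • ξ))) := by
  rw [ft_eq, ft_eq, map_mul, Complex.conj_ofReal]
  push_cast
  ring

lemma const_cancel : ((((2 * π) ^ (-(n : ℝ) / 2) : ℝ) ^ 2 : ℝ)) * |(((2 * π)⁻¹ : ℝ) ^ n)⁻¹| = 1 := by
  have h2π : (0 : ℝ) < 2 * π := by positivity
  rw [abs_of_pos (by positivity)]
  rw [inv_pow, inv_inv]
  rw [← Real.rpow_natCast ((2 * π) ^ (-(n : ℝ) / 2)) 2, ← Real.rpow_mul h2π.le,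
    ← Real.rpow_natCast (2 * π) n, ← Real.rpow_add h2π]
  norm_num

lemma parseval_ft (g h : 𝓢(𝕍, ℂ)) :
    ∫ ξ : 𝕍, ft ⇑g ξ * conj (ft ⇑h ξ) = ∫ x : 𝕍, g x * conj (h x) := by
  have h2π : (2 * π : ℝ) ≠ 0 := by positivity
  calc ∫ ξ : 𝕍, ft ⇑g ξ * conj (ft ⇑h ξ)
      = ∫ ξ : 𝕍, (((2 * π) ^ (-(n : ℝ) / 2) : ℝ) ^ 2 : ℝ) •
          ((fun w : 𝕍 => 𝓕 ⇑g w * conj (𝓕 ⇑h w)) ((2 * π)⁻¹ • ξ)) := by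
        refine integral_congr_ae (Filter.Eventually.of_forall fun ξ => ?_)
        simp only
        rw [ft_mul_conj_eq, Complex.real_smul]
    _ = (((2 * π) ^ (-(n : ℝ) / 2) : ℝ) ^ 2 : ℝ) •
          ((|(((2 * π)⁻¹ : ℝ) ^ Module.finrank ℝ 𝕍)⁻¹|) •
            ∫ w : 𝕍, 𝓕 ⇑g w * conj (𝓕 ⇑h w)) := by
        rw [integral_smul, Measure.integral_comp_smul volume
          (fun w : 𝕍 => 𝓕 ⇑g w * conj (𝓕 ⇑h w)) ((2 * π)⁻¹)]
    _ = ∫ x : 𝕍, g x * conj (h x) := by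
        rw [smul_smul, finrank_euclideanSpace_fin, const_cancel, one_smul, parsevalF]

lemma ft_mul_conj_integrable (g h : 𝓢(𝕍, ℂ)) :
    Integrable (fun ξ : 𝕍 => ft ⇑g ξ * conj (ft ⇑h ξ)) := by
  have h2π : ((2 * π)⁻¹ : ℝ) ≠ 0 := by positivity
  have h1 : Integrable (fun ξ : 𝕍 =>
      (fun w : 𝕍 => 𝓕 ⇑g w * conj (𝓕 ⇑h w)) ((2 * π)⁻¹ • ξ)) :=
    (F_mul_conj_integrable g h).comp_smul h2π
  have := (h1.smul ((((2 * π) ^ (-(n : ℝ) / 2) : ℝ) ^ 2 : ℝ)))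
  refine this.congr (Filter.Eventually.of_forall fun ξ => ?_)
  simp only [Pi.smul_apply]
  rw [ft_mul_conj_eq, Complex.real_smul]
lemma F_pderiv (f : 𝓢(𝕍, ℂ)) (i : Fin n) (ξ : 𝕍) :
    𝓕 (⇑(sdP i f)) ξ = (2 * π * Complex.I * (ξ i)) * 𝓕 ⇑f ξ := by
  have hcoe : ⇑(SchwartzMap.fderivCLM ℝ 𝕍 ℂ f) = fderiv ℝ ⇑f :=
    funext fun x => SchwartzMap.fderivCLM_apply ℝ f x
  have hd : Integrable (fderiv ℝ ⇑f) := by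
    rw [← hcoe]; exact (SchwartzMap.fderivCLM ℝ 𝕍 ℂ f).integrable
  have key := Real.fourier_fderiv f.integrable f.differentiable hd
  have e1 : ⇑(sdP i f) = fun x => fderiv ℝ ⇑f x (EuclideanSpace.single i 1) :=
    funext fun x => rfl
  rw [e1, ← Real.fourier_continuousLinearMap_apply hd, key,
    VectorFourier.fourierSMulRight_apply]
  have hinner : ⟪ξ, EuclideanSpace.single i (1 : ℝ)⟫ = ξ i := by
    rw [EuclideanSpace.inner_single_right]
    simp
  have hinner' : innerSL ℝ ξ (EuclideanSpace.single i (1 : ℝ)) = ξ i := hinner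
  simp only [ContinuousLinearMap.neg_apply, innerSL_apply_apply, hinner, hinner']
  simp only [smul_neg, neg_smul, neg_neg, Complex.real_smul, smul_eq_mul]
  ring

lemma ft_pderiv (f : 𝓢(𝕍, ℂ)) (i : Fin n) (ξ : 𝕍) :
    ft (⇑(sdP i f)) ξ = (Complex.I * (ξ i)) * ft ⇑f ξ := by
  have h2π : ((2 * π : ℝ) : ℂ) ≠ 0 := by
    simp only [ne_eq, Complex.ofReal_eq_zero]
    positivity
  rw [ft_eq, ft_eq, F_pderiv]
  have : (((2 * π)⁻¹ • ξ : 𝕍) i : ℝ) = (2 * π)⁻¹ * ξ i := rfl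
  rw [this]
  have hπ : (π : ℂ) ≠ 0 := Complex.ofReal_ne_zero.2 Real.pi_ne_zero
  push_cast
  field_simp

lemma ft_pderiv_iter (f : 𝓢(𝕍, ℂ)) (i : Fin n) (k : ℕ) (ξ : 𝕍) :
    ft (⇑((sdP i)^[k] f)) ξ = (Complex.I * (ξ i)) ^ k * ft ⇑f ξ := by
  induction k generalizing f with
  | zero => simp
  | succ k ih =>
    rw [Function.iterate_succ_apply, ih, ft_pderiv, pow_succ]
    ring

lemma ft_sD (α : Fin n → ℕ) (f : 𝓢(𝕍, ℂ)) (ξ : 𝕍) :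
    ft ⇑(sD α f) ξ = (∏ i, (Complex.I * (ξ i)) ^ α i) * ft ⇑f ξ := by
  rw [sD, Fin.prod_univ_def]
  induction List.finRange n generalizing f with
  | nil => simp
  | cons i l ih =>
    rw [List.foldr_cons, List.map_cons, List.prod_cons, ft_pderiv_iter, ih]
    ring

lemma weight_expand (m : ℕ) (ξ : 𝕍) :
    ((1 + ‖ξ‖ ^ 2) ^ m : ℝ) =
      ∑ α ∈ (Fintype.piFinset fun _ : Fin n => Finset.range (m + 1)).filter
          (fun α => ∑ i, α i ≤ m),
        ((m.choose (∑ i, α i) * Nat.multinomial Finset.univ α : ℕ) : ℝ) *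
          ∏ i, (ξ i : ℝ) ^ (2 * α i) := by
  have hnorm : ‖ξ‖ ^ 2 = ∑ i, (ξ i : ℝ) ^ 2 := by
    rw [EuclideanSpace.norm_eq, Real.sq_sqrt (by positivity)]
    simp [sq_abs]
  have hS : (Fintype.piFinset fun _ : Fin n => Finset.range (m + 1)).filter
      (fun α => ∑ i, α i ≤ m) =
      (Finset.range (m + 1)).biUnion (fun k => Finset.piAntidiag Finset.univ k) := by
    ext α
    simp only [Finset.mem_filter, Fintype.mem_piFinset, Finset.mem_range, Nat.lt_succ_iff,
      Finset.mem_biUnion, Finset.mem_piAntidiag, Finset.mem_univ, ne_eq, not_true_eq_false,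
      implies_true, and_true]
    constructor
    · rintro ⟨-, hle⟩
      exact ⟨∑ i, α i, hle, rfl⟩
    · rintro ⟨k, hk, rfl⟩
      refine ⟨fun i => le_trans ?_ hk, hk⟩
      exact Finset.single_le_sum (fun j _ => Nat.zero_le _) (Finset.mem_univ i)
  rw [hS, Finset.sum_biUnion]
  · rw [hnorm, add_comm, add_pow]
    simp only [one_pow, mul_one]
    refine Finset.sum_congr rfl fun k hk => ?_
    rw [Finset.sum_pow_eq_sum_piAntidiag, Finset.sum_mul]
    refine Finset.sum_congr rfl fun α hα => ?_
    have hsum : ∑ i, α i = k := by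
      rw [Finset.mem_piAntidiag] at hα
      exact hα.1
    rw [hsum]
    rw [show (∏ i, ((ξ i : ℝ) ^ 2) ^ α i) = ∏ i, (ξ i : ℝ) ^ (2 * α i) from
      Finset.prod_congr rfl fun i _ => by rw [← pow_mul]]
    push_cast
    ring
  · intro a _ b _ hab
    simp only [Finset.disjoint_left, Finset.mem_piAntidiag]
    rintro α ⟨h1, -⟩ ⟨h2, -⟩
    exact hab (h1 ▸ h2 ▸ rfl)

lemma prod_pow_mul_ft (α : Fin n → ℕ) (u v : 𝓢(𝕍, ℂ)) (ξ : 𝕍) :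
    (∏ i, ((ξ i : ℝ) : ℂ) ^ (2 * α i)) * (ft ⇑u ξ * conj (ft ⇑v ξ)) =
      ft ⇑(sD α u) ξ * conj (ft ⇑(sD α v) ξ) := by
  have hPQ : (∏ i, (Complex.I * (ξ i : ℝ)) ^ α i) *
      (∏ i, ((-Complex.I) * (ξ i : ℝ)) ^ α i) = ∏ i, ((ξ i : ℝ) : ℂ) ^ (2 * α i) := by
    rw [← Finset.prod_mul_distrib]
    refine Finset.prod_congr rfl fun i _ => ?_
    rw [← mul_pow]
    rw [show (Complex.I * (ξ i : ℝ)) * ((-Complex.I) * (ξ i : ℝ))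
        = (((ξ i : ℝ) : ℂ)) ^ 2 by
      calc (Complex.I * (ξ i : ℝ)) * ((-Complex.I) * (ξ i : ℝ))
          = -(Complex.I ^ 2) * (((ξ i : ℝ) : ℂ)) ^ 2 := by ring
        _ = (((ξ i : ℝ) : ℂ)) ^ 2 := by rw [Complex.I_sq]; ring]
    rw [← pow_mul]
  rw [ft_sD, ft_sD, map_mul, map_prod]
  simp only [map_pow, map_mul, Complex.conj_I, Complex.conj_ofReal]
  rw [← hPQ]
  ring

theorem integral_weight_mul_ft_mul_conj_ft_eq_sum_multinomial'
    (m : ℕ) (u v : 𝓢(𝕍, ℂ)) :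
    ∫ ξ : 𝕍, (((1 + ‖ξ‖ ^ 2) ^ m : ℝ) : ℂ) * (ft (⇑u) ξ * (starRingEnd ℂ) (ft (⇑v) ξ)) =
      ∑ α ∈ (Fintype.piFinset fun _ : Fin n => Finset.range (m + 1)).filter
          (fun α => ∑ i, α i ≤ m),
        ((m.choose (∑ i, α i) * Nat.multinomial Finset.univ α : ℕ) : ℂ) *
          ∫ x, mderiv α (⇑u) x * (starRingEnd ℂ) (mderiv α (⇑v) x) := by
  classical
  set S := (Fintype.piFinset fun _ : Fin n => Finset.range (m + 1)).filter
      (fun α => ∑ i, α i ≤ m) with hSdef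
  calc ∫ ξ : 𝕍, (((1 + ‖ξ‖ ^ 2) ^ m : ℝ) : ℂ) * (ft (⇑u) ξ * conj (ft (⇑v) ξ))
      = ∫ ξ : 𝕍, ∑ α ∈ S, ((m.choose (∑ i, α i) * Nat.multinomial Finset.univ α : ℕ) : ℂ) *
          ((∏ i, ((ξ i : ℝ) : ℂ) ^ (2 * α i)) * (ft (⇑u) ξ * conj (ft (⇑v) ξ))) := by
        refine integral_congr_ae (Filter.Eventually.of_forall fun ξ => ?_)
        simp only
        rw [weight_expand m ξ]
        push_cast
        rw [Finset.sum_mul]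
        exact Finset.sum_congr rfl fun α _ => by ring
    _ = ∑ α ∈ S, ∫ ξ : 𝕍, ((m.choose (∑ i, α i) * Nat.multinomial Finset.univ α : ℕ) : ℂ) *
          ((∏ i, ((ξ i : ℝ) : ℂ) ^ (2 * α i)) * (ft (⇑u) ξ * conj (ft (⇑v) ξ))) := by
        refine integral_finset_sum _ fun α _ => ?_
        have := (ft_mul_conj_integrable (sD α u) (sD α v)).const_mul
          ((m.choose (∑ i, α i) * Nat.multinomial Finset.univ α : ℕ) : ℂ)
        refine this.congr (Filter.Eventually.of_forall fun ξ => ?_)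
        simp only
        rw [prod_pow_mul_ft]
    _ = ∑ α ∈ S, ((m.choose (∑ i, α i) * Nat.multinomial Finset.univ α : ℕ) : ℂ) *
          ∫ x, mderiv α (⇑u) x * conj (mderiv α (⇑v) x) := by
        refine Finset.sum_congr rfl fun α _ => ?_
        rw [MeasureTheory.integral_const_mul]
        congr 1
        calc ∫ ξ : 𝕍, (∏ i, ((ξ i : ℝ) : ℂ) ^ (2 * α i)) * (ft (⇑u) ξ * conj (ft (⇑v) ξ))
            = ∫ ξ : 𝕍, ft ⇑(sD α u) ξ * conj (ft ⇑(sD α v) ξ) := by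
              refine integral_congr_ae (Filter.Eventually.of_forall fun ξ => ?_)
              simp only
              rw [prod_pow_mul_ft]
          _ = ∫ x : 𝕍, (sD α u) x * conj ((sD α v) x) := parseval_ft _ _
          _ = ∫ x, mderiv α (⇑u) x * conj (mderiv α (⇑v) x) := by
              rw [mderiv_coe, mderiv_coe]

/-- `∫ (1+|ξ|²)^m û(ξ) conj(v̂(ξ)) dξ
  = Σ_{|α| ≤ m} C(m,|α|) (|α|!/α!) ∫ ∂^α u conj(∂^α v) dx` for Schwartz `u, v`. -/
theorem integral_weight_mul_ft_mul_conj_ft_eq_sum_multinomial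
    (n m : ℕ) (u v : SchwartzMap (EuclideanSpace ℝ (Fin n)) ℂ) :
    ∫ ξ, (((1 + ‖ξ‖ ^ 2) ^ m : ℝ) : ℂ) * (ft (⇑u) ξ * (starRingEnd ℂ) (ft (⇑v) ξ)) =
      ∑ α ∈ (Fintype.piFinset fun _ : Fin n => Finset.range (m + 1)).filter
          (fun α => ∑ i, α i ≤ m),
        ((m.choose (∑ i, α i) * Nat.multinomial Finset.univ α : ℕ) : ℂ) *
          ∫ x, mderiv α (⇑u) x * (starRingEnd ℂ) (mderiv α (⇑v) x) :=
  integral_weight_mul_ft_mul_conj_ft_eq_sum_multinomial' m u v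
end

section
/- Let α ∈ ℝ with 0 < α < 1/e, and for N ∈ ℕ₀ define S_N = (1/2) Σ_{k=0}^{2N} α^{2k} + Σ_{0 ≤ j < k ≤ 2N} (-α)^{j+k} e^{-(k-j)}. Then for every N ≥ 1, S_N - S_{N-1} = -(α^{4N-2} / (2(1+αe))) · ((1+α²)(1-αe) + 2(1-α/e)(αe)^{1-2N}), and this quantity is strictly negative; hence the sequence (S_N) is strictly decreasing. -/
open MeasureTheory

private lemma sum_pairs_eq (n : ℕ) (f : ℕ → ℕ → ℝ) :
    ∑ p ∈ (Finset.range n ×ˢ Finset.range n).filter (fun p => p.1 < p.2), f p.1 p.2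
      = ∑ k ∈ Finset.range n, ∑ j ∈ Finset.range k, f j k := by
  rw [Finset.sum_filter, Finset.sum_product_right]
  refine Finset.sum_congr rfl fun k hk => ?_
  rw [← Finset.sum_filter]
  have hkn := Finset.mem_range.mp hk
  have : (Finset.range n).filter (fun j => j < k) = Finset.range k := by
    ext j
    simp only [Finset.mem_filter, Finset.mem_range]
    exact ⟨fun h => h.2, fun h => ⟨h.trans hkn, h⟩⟩
  rw [this]

private lemma row_sum (α : ℝ) (hα : 0 < α) (m : ℕ) :
    ∑ j ∈ Finset.range m, (-α) ^ (j + m) * Real.exp (-((m : ℝ) - (j : ℝ)))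
      = (-α) ^ m / Real.exp 1 ^ m * (((-α * Real.exp 1) ^ m - 1) / (-α * Real.exp 1 - 1)) := by
  have hexp : ∀ k : ℕ, Real.exp (k : ℝ) = Real.exp 1 ^ k := fun k => by
    rw [← Real.exp_nat_mul, mul_one]
  have h1 : ∀ j ∈ Finset.range m, (-α) ^ (j + m) * Real.exp (-((m : ℝ) - (j : ℝ)))
      = (-α * Real.exp 1) ^ j * ((-α) ^ m / Real.exp 1 ^ m) := by
    intro j _
    rw [neg_sub, Real.exp_sub, hexp, hexp, pow_add, mul_pow]
    ring
  rw [Finset.sum_congr rfl h1, ← Finset.sum_mul, geom_sum_eq]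
  · ring
  · nlinarith [Real.exp_pos 1, Real.add_one_le_exp (1:ℝ)]

/-- For `0 < α < 1/e` and `S_N = (1/2) Σ_{k=0}^{2N} α^{2k}
+ Σ_{0 ≤ j < k ≤ 2N} (-α)^{j+k} e^{-(k-j)}`, we have for every `N ≥ 1`
`S_N - S_{N-1} = -(α^{4N-2}/(2(1+αe))) ((1+α²)(1-αe) + 2(1-α/e)(αe)^{1-2N}) < 0`,
and hence `S` is strictly decreasing. -/
theorem normSq_Hneg1_alternating_deltas_strictAnti
    (α : ℝ) (hα0 : 0 < α) (hα1 : α < 1 / Real.exp 1)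
    (S : ℕ → ℝ)
    (hS : ∀ N : ℕ, S N = (1 / 2) * (∑ k ∈ Finset.range (2 * N + 1), α ^ (2 * k))
        + ∑ p ∈ (Finset.range (2 * N + 1) ×ˢ Finset.range (2 * N + 1)).filter
            (fun p => p.1 < p.2),
          (-α) ^ (p.1 + p.2) * Real.exp (-((p.2 : ℝ) - (p.1 : ℝ)))) :
    (∀ N : ℕ, 1 ≤ N →
      S N - S (N - 1)
          = -(α ^ (4 * N - 2) / (2 * (1 + α * Real.exp 1)))
            * ((1 + α ^ 2) * (1 - α * Real.exp 1)
              + 2 * (1 - α / Real.exp 1) * (α * Real.exp 1) ^ (1 - 2 * (N : ℤ)))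
        ∧ S N - S (N - 1) < 0)
    ∧ StrictAnti S := by
  have hE : (0:ℝ) < Real.exp 1 := Real.exp_pos 1
  have hE1 : (1:ℝ) < Real.exp 1 := by
    have := Real.add_one_le_exp (1:ℝ); linarith
  have hαE : α * Real.exp 1 < 1 := by
    rw [div_eq_inv_mul, mul_one] at hα1
    calc α * Real.exp 1 < (Real.exp 1)⁻¹ * Real.exp 1 := by
          apply mul_lt_mul_of_pos_right hα1 hE
      _ = 1 := inv_mul_cancel₀ (ne_of_gt hE)
  have hden : (0:ℝ) < 1 + α * Real.exp 1 := by positivity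
  have key : ∀ n : ℕ, S (n + 1) - S n
      = -(α ^ (4 * n + 2) / (2 * (1 + α * Real.exp 1)))
        * ((1 + α ^ 2) * (1 - α * Real.exp 1)
          + 2 * (1 - α / Real.exp 1) * (α ^ (2*n+1) * Real.exp 1 ^ (2*n+1))⁻¹) := by
    intro n
    rw [hS (n + 1), hS n,
        sum_pairs_eq (2 * (n + 1) + 1) (fun j k => (-α) ^ (j + k) * Real.exp (-((k : ℝ) - (j : ℝ)))),
        sum_pairs_eq (2 * n + 1) (fun j k => (-α) ^ (j + k) * Real.exp (-((k : ℝ) - (j : ℝ))))]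
    have h1 : 2 * (n + 1) + 1 = (2 * n + 1) + 1 + 1 := by ring
    rw [h1, Finset.sum_range_succ (f := fun k => α ^ (2 * k)),
        Finset.sum_range_succ (f := fun k => α ^ (2 * k)),
        Finset.sum_range_succ (f := fun k => ∑ j ∈ Finset.range k,
          (-α) ^ (j + k) * Real.exp (-((k : ℝ) - (j : ℝ)))),
        Finset.sum_range_succ (f := fun k => ∑ j ∈ Finset.range k,
          (-α) ^ (j + k) * Real.exp (-((k : ℝ) - (j : ℝ)))),
        row_sum α hα0, row_sum α hα0]
    have hXY : ∀ m : ℕ, (-α : ℝ) ^ m = (-1)^m * α ^ m := by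
      intro m; rw [neg_pow]
    have hodd : ((-1:ℝ))^(2*n+1) = -1 := by
      rw [pow_succ, pow_mul]; norm_num
    have heven : ((-1:ℝ))^(2*n+1+1) = 1 := by
      rw [pow_succ, hodd]; norm_num
    have hnm : (-α * Real.exp 1 : ℝ) = (-1) * (α * Real.exp 1) := by ring
    have hq1 : (-α * Real.exp 1 : ℝ) ^ (2*n+1) = -( α ^ (2*n+1) * Real.exp 1 ^ (2*n+1)) := by
      rw [hnm, mul_pow, hodd, mul_pow]; ring
    have hq2 : (-α * Real.exp 1 : ℝ) ^ (2*n+1+1) = α ^ (2*n+1) * Real.exp 1 ^ (2*n+1) * (α * Real.exp 1) := by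
      rw [hnm, mul_pow, heven, mul_pow, pow_succ, pow_succ]; ring
    have hp1 : (-α : ℝ) ^ (2*n+1) = -(α ^ (2*n+1)) := by rw [hXY, hodd]; ring
    have hp2 : (-α : ℝ) ^ (2*n+1+1) = α ^ (2*n+1) * α := by rw [hXY, heven, pow_succ]; ring
    have ha1 : (α:ℝ) ^ (2*(2*n+1)) = α ^ (2*n+1) * α ^ (2*n+1) := by
      rw [two_mul, pow_add]
    have ha2 : (α:ℝ) ^ (2*(2*n+1+1)) = α ^ (2*n+1) * α ^ (2*n+1) * α * α := by
      rw [← pow_add, ← pow_succ, ← pow_succ]; ring_nf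
    have ha3 : (α:ℝ) ^ (4*n+2) = α ^ (2*n+1) * α ^ (2*n+1) := by
      rw [← pow_add]; ring_nf
    have hEp : (Real.exp 1 : ℝ) ^ (2*n+1+1) = Real.exp 1 ^ (2*n+1) * Real.exp 1 := pow_succ _ _
    rw [hq1, hq2, hp1, hp2, ha1, ha2, ha3, hEp]
    have hX : (0:ℝ) < α ^ (2*n+1) := pow_pos hα0 _
    have hY : (0:ℝ) < Real.exp 1 ^ (2*n+1) := pow_pos hE _
    generalize hXg : α ^ (2*n+1) = X at hX ⊢
    generalize hYg : Real.exp 1 ^ (2*n+1) = Y at hY ⊢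
    have hne1 : Real.exp 1 ≠ 0 := ne_of_gt hE
    have hne2 : Y ≠ 0 := ne_of_gt hY
    have hne3 : X ≠ 0 := ne_of_gt hX
    have hne4 : -α * Real.exp 1 - 1 ≠ 0 := by nlinarith
    have hne4' : -(α * Real.exp 1) - 1 ≠ 0 := by nlinarith
    have hne5 : 1 + α * Real.exp 1 ≠ 0 := ne_of_gt hden
    field_simp
    ring
  have keyneg : ∀ n : ℕ, S (n + 1) - S n < 0 := by
    intro n
    rw [key n]
    have hX : (0:ℝ) < α ^ (2*n+1) := pow_pos hα0 _
    have hY : (0:ℝ) < Real.exp 1 ^ (2*n+1) := pow_pos hE _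
    have h1 : (0:ℝ) < (1 + α ^ 2) * (1 - α * Real.exp 1) := by nlinarith
    have h2 : (0:ℝ) < 1 - α / Real.exp 1 := by
      have h5 : 1 / Real.exp 1 < 1 := by rw [div_lt_one hE]; exact hE1
      have : α / Real.exp 1 < 1 := by
        rw [div_lt_one hE]; linarith
      linarith
    have h3 : (0:ℝ) < α ^ (4*n+2) := pow_pos hα0 _
    have h4 : (0:ℝ) < (α ^ (2*n+1) * Real.exp 1 ^ (2*n+1))⁻¹ := by positivity
    have : (0:ℝ) < α ^ (4 * n + 2) / (2 * (1 + α * Real.exp 1))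
        * ((1 + α ^ 2) * (1 - α * Real.exp 1)
          + 2 * (1 - α / Real.exp 1) * (α ^ (2*n+1) * Real.exp 1 ^ (2*n+1))⁻¹) := by
      positivity
    linarith
  constructor
  · intro N hN
    obtain ⟨n, rfl⟩ : ∃ n, N = n + 1 := ⟨N - 1, (Nat.succ_pred_eq_of_pos hN).symm⟩
    have e1 : n + 1 - 1 = n := rfl
    have e2 : 4 * (n + 1) - 2 = 4 * n + 2 := by omega
    have e3 : (α * Real.exp 1) ^ (1 - 2 * ((n + 1 : ℕ) : ℤ))
        = (α ^ (2*n+1) * Real.exp 1 ^ (2*n+1))⁻¹ := by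
      have h : (1 - 2 * ((n + 1 : ℕ) : ℤ)) = -((2*n+1 : ℕ) : ℤ) := by push_cast; ring
      rw [h, zpow_neg, zpow_natCast, mul_pow]
    rw [e1, e2, e3]
    exact ⟨key n, keyneg n⟩
  · exact strictAnti_nat_of_succ_lt fun n => by linarith [keyneg n]
end
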